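/- Let n ≥ 2, let D be the subgroup of diagonal matrices of determinant 1 in SL_n(ℂ), and let α₂ ∈ SL_n(ℂ) be the matrix with 1 in every diagonal entry, 1 in every entry of the last (bottom) row, and 0 elsewhere. Then the ℂ-linear span of D ∪ α₂Dα₂⁻¹ contains every matrix β ∈ Mat_n(ℂ) whose (i,j) entry is 0 whenever i ≠ j and i < n (i.e., every matrix supported on the diagonal and the bottom row). -/

import Mathlib

open Matrix

namespace Span12Aux

variable {n : ℕ}

noncomputable def dd (a b : Fin n) (x : ℂ) : Fin n → ℂ :=
  fun j => if j = a then x else if j = b then x⁻¹ else 1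

lemma prod_dd {a b : Fin n} (hab : a ≠ b) {x : ℂ} (hx : x ≠ 0) :
    ∏ j, dd a b x j = 1 := by
  classical
  have hb : b ∈ Finset.univ.erase a := Finset.mem_erase.2 ⟨hab.symm, Finset.mem_univ b⟩
  rw [← Finset.mul_prod_erase Finset.univ _ (Finset.mem_univ a),
      ← Finset.mul_prod_erase _ _ hb,
      Finset.prod_eq_one (fun j hj => ?_)]
  · simp only [dd, if_pos rfl, if_neg hab.symm, ↓reduceIte]
    field_simp
  · simp only [Finset.mem_erase] at hj
    simp [dd, hj.1, hj.2.1]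

def alphaM (L : Fin n) : Matrix (Fin n) (Fin n) ℂ :=
  fun i j => if i = j then 1 else if i = L then 1 else 0

def gam (L : Fin n) : Matrix (Fin n) (Fin n) ℂ :=
  fun i j => if i = j then 1 else if i = L then -1 else 0

noncomputable def Mrow (L : Fin n) (d : Fin n → ℂ) : Matrix (Fin n) (Fin n) ℂ :=
  fun i j => if i = j then d i else if i = L then d j - d L else 0

lemma sum_two (k l : Fin n) (h : k ≠ l) (c1 c2 : ℂ) :
    ∑ j, (if j = k then c1 else if j = l then c2 else 0) = c1 + c2 := by
  have h1 : ∀ j : Fin n, (if j = k then c1 else if j = l then c2 else 0)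
      = (if j = k then c1 else 0) + (if j = l then c2 else 0) := by
    intro j
    by_cases h1 : j = k <;> by_cases h2 : j = l <;> simp_all
  simp [h1, Finset.sum_add_distrib]

lemma alphaM_mul_gam (L : Fin n) : alphaM L * gam L = 1 := by
  ext i k
  rw [Matrix.mul_apply]
  by_cases hi : i = L
  · subst hi
    have h1 : ∀ j, alphaM i i j = 1 := by
      intro j; by_cases h : i = j <;> simp [alphaM, h]
    simp only [h1, one_mul]
    by_cases hk : k = i
    · subst hk
      have h2 : ∀ j : Fin n, gam k j k = if j = k then (1:ℂ) else 0 := by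
        intro j; by_cases h : j = k <;> simp [gam, h]
      simp [h2, Matrix.one_apply]
    · have h2 : ∀ j : Fin n, gam i j k = if j = k then (1:ℂ) else if j = i then -1 else 0 :=
        fun j => rfl
      rw [Finset.sum_congr rfl (fun j _ => h2 j), sum_two k i hk 1 (-1)]
      simp [Matrix.one_apply_ne (Ne.symm hk)]
  · have h1 : ∀ j, alphaM L i j = if i = j then (1:ℂ) else 0 := by
      intro j; by_cases h : i = j <;> simp [alphaM, h, hi]
    simp only [h1, ite_mul, one_mul, zero_mul]
    rw [Finset.sum_ite_eq]
    by_cases hik : i = k <;> simp [gam, hi, hik, Matrix.one_apply]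

lemma alphaM_inv (L : Fin n) : (alphaM L)⁻¹ = gam L :=
  Matrix.inv_eq_right_inv (alphaM_mul_gam L)

lemma conj_diag (L : Fin n) (d : Fin n → ℂ) :
    alphaM L * Matrix.diagonal d * gam L = Mrow L d := by
  ext i k
  rw [Matrix.mul_apply]
  by_cases hi : i = L
  · subst hi
    have h1 : ∀ j, (alphaM i * Matrix.diagonal d) i j = d j := by
      intro j
      rw [Matrix.mul_diagonal]
      by_cases h : i = j <;> simp [alphaM, h]
    simp only [h1]
    by_cases hk : k = i
    · subst hk
      have h2 : ∀ j : Fin n, d j * gam k j k = if j = k then d k else 0 := by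
        intro j; by_cases h : j = k <;> simp [gam, h]
      simp [h2, Mrow]
    · have hik : ¬ i = k := fun h => hk h.symm
      have h2 : ∀ j : Fin n, d j * gam i j k
          = if j = k then d k else if j = i then -(d i) else 0 := by
        intro j
        by_cases h1' : j = k
        · subst h1'; simp [gam]
        · by_cases h2' : j = i <;> simp [gam, h1', h2', hk, hik]
      rw [Finset.sum_congr rfl (fun j _ => h2 j), sum_two k i hk (d k) (-(d i))]
      simp [Mrow, hk, hik, sub_eq_add_neg]
  · have h1 : ∀ j, (alphaM L * Matrix.diagonal d) i j = if i = j then d j else 0 := by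
      intro j
      rw [Matrix.mul_diagonal]
      by_cases h : i = j <;> simp [alphaM, h, hi]
    simp only [h1, ite_mul, zero_mul]
    rw [Finset.sum_ite_eq]
    by_cases hik : i = k <;> simp [gam, Mrow, hi, hik]

lemma diag_combo (i j : Fin n) (hij : i ≠ j) :
    Matrix.single i i (1:ℂ)
      = (4/3 : ℂ) • Matrix.diagonal (dd i j 2)
        + (2/3 : ℂ) • Matrix.diagonal (dd i j 2⁻¹)
        - (2:ℂ) • (1 : Matrix (Fin n) (Fin n) ℂ) := by
  ext a b
  by_cases hab : a = b
  · subst hab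
    by_cases hai : a = i
    · subst hai
      simp [dd, Matrix.single, Matrix.one_apply, hij]
      norm_num
    · have hai' : ¬ i = a := fun h => hai h.symm
      by_cases haj : a = j
      · subst haj
        have h2 : ¬ a = i := hai
        simp [dd, Matrix.single, Matrix.one_apply, hai, hai']
        norm_num
      · simp [dd, Matrix.single, Matrix.one_apply, hai, haj, hai']
        norm_num
  · have h1 : ¬ (i = a ∧ i = b) := by
      rintro ⟨rfl, rfl⟩; exact hab rfl
    simp [Matrix.single, Matrix.one_apply, hab,
      Matrix.diagonal_apply_ne _ hab, h1]

lemma row_combo (L k : Fin n) (hk : k ≠ L) :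
    Matrix.single L k (1:ℂ)
      = (4/3 : ℂ) • (Mrow L (dd k L 2) - Matrix.diagonal (dd k L 2))
        + (2/3 : ℂ) • (Mrow L (dd k L 2⁻¹) - Matrix.diagonal (dd k L 2⁻¹)) := by
  ext a b
  by_cases hab : a = b
  · subst hab
    have h1 : ¬ (L = a ∧ k = a) := by
      rintro ⟨rfl, h⟩; exact hk h
    simp [Mrow, Matrix.single, h1]
  · by_cases haL : a = L
    · subst haL
      have hka : ¬ a = k := fun h => hk h.symm
      by_cases hbk : b = k
      · subst hbk
        simp [Mrow, Matrix.single, dd, hab, hk, hka,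
          Matrix.diagonal_apply_ne _ hab]
        norm_num
      · have h2 : ¬ k = b := fun h => hbk h.symm
        have h3 : ¬ b = a := fun h => hab h.symm
        simp [Mrow, Matrix.single, dd, hab, hbk, h2, h3, hka,
          Matrix.diagonal_apply_ne _ hab]
        norm_num
    · have h4 : ¬ L = a := fun h => haL h.symm
      simp [Mrow, Matrix.single, hab, haL, h4, Matrix.diagonal_apply_ne _ hab]

end Span12Aux

open Span12Aux

/-- Let `n ≥ 2`, let `D` be the set of diagonal determinant-one matrices
in `SL_n(ℂ)`, and let `α₂` be the matrix with `1` on the diagonal and in every entry of the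
bottom row, zero elsewhere. Then the `ℂ`-span of `D ∪ α₂Dα₂⁻¹` contains every matrix
supported on the diagonal and the bottom row. -/
theorem span_diag_union_conj_row (n : ℕ) (hn : 2 ≤ n)
    (D : Set (Matrix (Fin n) (Fin n) ℂ))
    (hD : D = {x | x.det = 1 ∧ ∀ i j : Fin n, i ≠ j → x i j = 0})
    (α₂ : Matrix (Fin n) (Fin n) ℂ)
    (hα₂ : α₂ = Matrix.of fun i j : Fin n =>
      if i = j then 1 else if i = (⟨n - 1, by omega⟩ : Fin n) then 1 else 0)
    (β : Matrix (Fin n) (Fin n) ℂ)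
    (hβ : ∀ i j : Fin n, i ≠ j → (i : ℕ) < n - 1 → β i j = 0) :
    β ∈ Submodule.span ℂ (D ∪ (fun x => α₂ * x * α₂⁻¹) '' D) := by
  classical
  have hn1 : n - 1 < n := by omega
  set L : Fin n := ⟨n - 1, hn1⟩ with hL
  have hα' : α₂ = alphaM L := by
    rw [hα₂]; rfl
  set sp := Submodule.span ℂ (D ∪ (fun x => α₂ * x * α₂⁻¹) '' D) with hsp
  have hdiagD : ∀ d : Fin n → ℂ, (∏ j, d j) = 1 → Matrix.diagonal d ∈ D := by
    intro d hd
    rw [hD]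
    exact ⟨by simpa [Matrix.det_diagonal] using hd,
      fun i j h => Matrix.diagonal_apply_ne d h⟩
  have h1 : ∀ d : Fin n → ℂ, (∏ j, d j) = 1 → Matrix.diagonal d ∈ sp :=
    fun d hd => Submodule.subset_span (Or.inl (hdiagD d hd))
  have h2 : ∀ d : Fin n → ℂ, (∏ j, d j) = 1 → Mrow L d ∈ sp := by
    intro d hd
    have hm : α₂ * Matrix.diagonal d * α₂⁻¹ ∈ sp :=
      Submodule.subset_span (Or.inr ⟨Matrix.diagonal d, hdiagD d hd, rfl⟩)
    rwa [hα', alphaM_inv, conj_diag] at hm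
  have hnt : Nontrivial (Fin n) := Fin.nontrivial_iff_two_le.mpr hn
  have hE : ∀ i : Fin n, Matrix.single i i (1:ℂ) ∈ sp := by
    intro i
    obtain ⟨j, hj⟩ := exists_ne i
    rw [diag_combo i j (Ne.symm hj)]
    refine Submodule.sub_mem _ (Submodule.add_mem _
      (Submodule.smul_mem _ _ (h1 _ (prod_dd (Ne.symm hj) two_ne_zero)))
      (Submodule.smul_mem _ _ (h1 _ (prod_dd (Ne.symm hj) (by norm_num)))))
      (Submodule.smul_mem _ _ ?_)
    rw [← Matrix.diagonal_one]
    exact h1 _ (by simp)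
  have hR : ∀ k : Fin n, k ≠ L → Matrix.single L k (1:ℂ) ∈ sp := by
    intro k hk
    rw [row_combo L k hk]
    exact Submodule.add_mem _
      (Submodule.smul_mem _ _ (Submodule.sub_mem _
        (h2 _ (prod_dd hk two_ne_zero)) (h1 _ (prod_dd hk two_ne_zero))))
      (Submodule.smul_mem _ _ (Submodule.sub_mem _
        (h2 _ (prod_dd hk (by norm_num))) (h1 _ (prod_dd hk (by norm_num)))))
  rw [Matrix.matrix_eq_sum_single β]
  refine Submodule.sum_mem _ fun i _ => Submodule.sum_mem _ fun j _ => ?_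
  by_cases hz : β i j = 0
  · simp [hz]
  · have hstd : Matrix.single i j (β i j)
        = β i j • Matrix.single i j (1:ℂ) := by
      rw [Matrix.smul_single, smul_eq_mul, mul_one]
    rw [hstd]
    refine Submodule.smul_mem _ _ ?_
    by_cases hij : i = j
    · subst hij; exact hE i
    · have hiL : i = L := by
        have h3 : ¬ (i : ℕ) < n - 1 := fun hlt => hz (hβ i j hij hlt)
        have := i.isLt
        have hLv : (L : ℕ) = n - 1 := rfl
        exact Fin.ext (by omega)
      subst hiL
      exact hR j (fun h => hij (h.symm ▸ rfl))
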